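/- Let A₀ < A₁ ≤ ∞ and let v : (−∞, A₁) → ℝ³ be measurable with v(t) = 0 for t ≤ A₀ and |v(t)| < 1 for all t, and set q(t) − q(t') = ∫_{t'}^t v(s) ds. Then for every t ∈ (A₀, A₁) the electric self-field estimate holds: ∫_{−∞}^t 2|t−t'| / (1 + D(t,t')²)^{5/4} dt' < ∞, where D(t,t')² = (t−t')² − |q(t)−q(t')|², and moreover this quantity is bounded by a function of t alone (independent of the particular v), namely by ∫_{−∞}^{A₀−1} 2|t−t'| (1 + (t−t')² (1 − ((t−A₀)/(t−t'))²))^{−5/4} dt' + |t−A₀+1|². -/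

import Mathlib

open MeasureTheory Set Filter

/-- A trajectory starting at rest: `v` measurable, `v = 0` on `(−∞, A₀]`, `|v| < 1`,
with position increments `q(t) − q(t') = ∫_{t'}^t v`.  For every `t ∈ (A₀, A₁)`
the electric self-field estimate holds:
`∫_{−∞}^t 2|t−t'|/(1+D(t,t')²)^{5/4} dt' < ∞`, with `D² = (t−t')² − |q(t)−q(t')|²`,
and the integral is bounded by
`∫_{−∞}^{A₀−1} 2|t−t'|(1+(t−t')²(1−((t−A₀)/(t−t'))²))^{−5/4} dt' + |t−A₀+1|²`,
a quantity depending on `t` alone. -/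
theorem electric_self_field_estimate
    (A₀ : ℝ) (A₁ : EReal) (v : ℝ → EuclideanSpace ℝ (Fin 3))
    (hmeas : Measurable v)
    (hzero : ∀ t ≤ A₀, v t = 0)
    (hsub : ∀ t, ‖v t‖ < 1) :
    ∀ t : ℝ, A₀ < t → (t : EReal) < A₁ →
      IntegrableOn
          (fun t' : ℝ => 2 * |t - t'| /
            (1 + ((t - t') ^ 2 - ‖∫ s in t'..t, v s‖ ^ 2)) ^ ((5 : ℝ) / 4))
          (Set.Iic t) ∧
        (∫ t' in Set.Iic t, 2 * |t - t'| /
            (1 + ((t - t') ^ 2 - ‖∫ s in t'..t, v s‖ ^ 2)) ^ ((5 : ℝ) / 4)) ≤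
          (∫ t' in Set.Iic (A₀ - 1), 2 * |t - t'| *
              (1 + (t - t') ^ 2 * (1 - ((t - A₀) / (t - t')) ^ 2)) ^ (-(5 : ℝ) / 4))
            + |t - A₀ + 1| ^ 2 := by
  intro t ht _
  set c : ℝ := t - A₀ with hc
  have hc0 : 0 < c := sub_pos.mpr ht
  -- v is interval integrable everywhere
  have hvi : ∀ a b : ℝ, IntervalIntegrable v volume a b := by
    intro a b
    refine ⟨?_, ?_⟩ <;>
    · refine Integrable.mono' (g := fun _ => (1:ℝ)) ?_ hmeas.aestronglyMeasurable.restrict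
        (Filter.Eventually.of_forall fun x => (hsub x).le)
      exact integrableOn_const measure_Ioc_lt_top.ne
  -- basic norm bound
  have hq : ∀ a b : ℝ, ‖∫ s in a..b, v s‖ ≤ |b - a| := by
    intro a b
    have := intervalIntegral.norm_integral_le_of_norm_le_const
      (C := 1) (f := v) (a := a) (b := b) (fun x _ => (hsub x).le)
    simpa using this
  -- stronger bound for t' ≤ A₀
  have hq0 : ∀ t' ≤ A₀, ‖∫ s in t'..t, v s‖ ≤ c := by
    intro t' ht'
    have hsplit : (∫ s in t'..A₀, v s) + (∫ s in A₀..t, v s) = ∫ s in t'..t, v s :=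
      intervalIntegral.integral_add_adjacent_intervals (hvi t' A₀) (hvi A₀ t)
    have h1 : (∫ s in t'..A₀, v s) = 0 := by
      rw [intervalIntegral.integral_congr (g := fun _ => 0)]
      · simp
      · intro s hs
        rw [Set.uIcc_of_le ht'] at hs
        exact hzero s hs.2
    have h2 : ‖∫ s in A₀..t, v s‖ ≤ c := by
      have := hq A₀ t
      rwa [abs_of_nonneg hc0.le] at this
    rw [← hsplit, h1, zero_add]
    exact h2
  -- the base is everywhere ≥ 1
  set B : ℝ → ℝ := fun t' => 1 + ((t - t') ^ 2 - ‖∫ s in t'..t, v s‖ ^ 2) with hB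
  have hB1 : ∀ t', 1 ≤ B t' := by
    intro t'
    have h := hq t' t
    have : ‖∫ s in t'..t, v s‖ ^ 2 ≤ (t - t') ^ 2 := by
      rw [← sq_abs (t - t')]
      exact pow_le_pow_left₀ (norm_nonneg _) h 2
    simp only [hB]; linarith
  have hBpos : ∀ t', 0 < B t' := fun t' => lt_of_lt_of_le one_pos (hB1 t')
  -- continuity of the integrand
  have hFcont : Continuous fun t' => ∫ s in t'..t, v s := by
    have h := intervalIntegral.continuous_primitive hvi t
    have heq : (fun t' => ∫ s in t'..t, v s) = fun t' => -∫ s in t..t', v s := by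
      funext t'; rw [intervalIntegral.integral_symm]
    rw [heq]; exact h.neg
  have hBcont : Continuous B := by
    apply Continuous.add continuous_const
    exact ((continuous_const.sub continuous_id).pow 2).sub ((hFcont.norm).pow 2)
  set f : ℝ → ℝ := fun t' => 2 * |t - t'| / (B t') ^ ((5:ℝ)/4) with hf
  have hfcont : Continuous f := by
    apply Continuous.div
    · exact (continuous_const.mul (continuous_const.sub continuous_id).abs)
    · exact hBcont.rpow_const fun x => Or.inl (hBpos x).ne'
    · intro x
      exact (Real.rpow_pos_of_pos (hBpos x) _).ne'
  have hfnonneg : ∀ t', 0 ≤ f t' := by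
    intro t'
    apply div_nonneg (by positivity)
    exact (Real.rpow_pos_of_pos (hBpos t') _).le
  -- the comparison function on the far region
  set g : ℝ → ℝ := fun t' => 2 * (t - t') * (1 + ((t - t') ^ 2 - c ^ 2)) ^ (-(5:ℝ)/4) with hg
  -- β positivity on far region
  have hβpos : ∀ u : ℝ, c + 1 ≤ u → 0 < 1 + (u ^ 2 - c ^ 2) := by
    intro u hu
    nlinarith [hc0]
  -- integrability of g on Iic (A₀ - 1)
  have hgint : IntegrableOn g (Set.Iic (A₀ - 1)) := by
    set h : ℝ → ℝ := fun u => 2 * u * (1 + (u ^ 2 - c ^ 2)) ^ (-(5:ℝ)/4) with hh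
    have hhint : IntegrableOn h (Set.Ici (c + 1)) := by
      rw [integrableOn_Ici_iff_integrableOn_Ioi]
      have hG : ∀ u ∈ Set.Ici (c + 1),
          HasDerivAt (fun u : ℝ => -4 * (1 + (u ^ 2 - c ^ 2)) ^ (-(1:ℝ)/4)) (h u) u := by
        intro u hu
        have hb : (0:ℝ) < 1 + (u ^ 2 - c ^ 2) := hβpos u hu
        have hd : HasDerivAt (fun u : ℝ => 1 + (u ^ 2 - c ^ 2)) (2 * u) u := by
          have h1 : HasDerivAt (fun x : ℝ => x ^ 2) (2 * u) u := by
            simpa using hasDerivAt_pow 2 u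
          simpa using (h1.sub_const (c ^ 2)).const_add 1
        have := (hd.rpow_const (p := -(1:ℝ)/4) (Or.inl hb.ne')).const_mul (-4 : ℝ)
        refine this.congr_deriv ?_
        rw [hh]
        have : (-(1:ℝ)/4 - 1) = -(5:ℝ)/4 := by norm_num
        rw [← this]
        ring
      have hnonneg : ∀ u ∈ Set.Ioi (c + 1), 0 ≤ h u := by
        intro u hu
        have hu' : (0:ℝ) < u := lt_trans (by linarith) hu
        have := hβpos u (le_of_lt hu)
        positivity
      have htend : Tendsto (fun u : ℝ => -4 * (1 + (u ^ 2 - c ^ 2)) ^ (-(1:ℝ)/4))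
          atTop (nhds 0) := by
        have h1 : Tendsto (fun u : ℝ => 1 + (u ^ 2 - c ^ 2)) atTop atTop := by
          apply tendsto_atTop_add_const_left
          apply tendsto_atTop_add_const_right
          exact tendsto_pow_atTop two_ne_zero
        have h2 : Tendsto (fun x : ℝ => x ^ (-(1:ℝ)/4)) atTop (nhds 0) := by
          have := tendsto_rpow_neg_atTop (y := (1:ℝ)/4) (by norm_num)
          simpa [neg_div] using this
        have := (h2.comp h1).const_mul (-4 : ℝ)
        simpa using this
      exact integrableOn_Ioi_deriv_of_nonneg' hG hnonneg htend
    -- transfer by the measure-preserving map x ↦ t - x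
    have hmp := Measure.measurePreserving_sub_left (volume : Measure ℝ) t
    have hemb : MeasurableEmbedding (fun x : ℝ => t - x) :=
      (MeasurableEquiv.subLeft t).measurableEmbedding
    have hpre : (fun x : ℝ => t - x) ⁻¹' (Set.Ici (c + 1)) = Set.Iic (A₀ - 1) := by
      ext x
      simp only [Set.mem_preimage, Set.mem_Ici, Set.mem_Iic, hc]
      constructor <;> intro h <;> linarith
    have := (hmp.integrableOn_comp_preimage hemb (f := h) (s := Set.Ici (c + 1))).2 hhint
    rw [hpre] at this
    exact this
  -- pointwise bound f ≤ g on the far region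
  have hfg : ∀ t' ∈ Set.Iic (A₀ - 1), f t' ≤ g t' := by
    intro t' ht'
    simp only [Set.mem_Iic] at ht'
    have htt' : c + 1 ≤ t - t' := by linarith
    have hβ : (0:ℝ) < 1 + ((t - t') ^ 2 - c ^ 2) := hβpos _ htt'
    have hBge : 1 + ((t - t') ^ 2 - c ^ 2) ≤ B t' := by
      have := hq0 t' (by linarith)
      have h2 : ‖∫ s in t'..t, v s‖ ^ 2 ≤ c ^ 2 := by
        have := pow_le_pow_left₀ (norm_nonneg _) this 2
        simpa using this
      simp only [hB]; linarith
    have habs : |t - t'| = t - t' := abs_of_pos (by linarith)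
    show 2 * |t - t'| / (B t') ^ ((5:ℝ)/4) ≤
      2 * (t - t') * (1 + ((t - t') ^ 2 - c ^ 2)) ^ (-(5:ℝ)/4)
    rw [habs]
    rw [show (-(5:ℝ)/4) = -((5:ℝ)/4) by norm_num,
      Real.rpow_neg hβ.le, ← div_eq_mul_inv]
    apply div_le_div_of_nonneg_left (by linarith) (Real.rpow_pos_of_pos hβ _)
    exact Real.rpow_le_rpow hβ.le hBge (by norm_num)
  -- integrability of f on the far region
  have hfint_far : IntegrableOn f (Set.Iic (A₀ - 1)) := by
    apply Integrable.mono' hgint hfcont.aestronglyMeasurable.restrict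
    rw [ae_restrict_iff' measurableSet_Iic]
    exact Filter.Eventually.of_forall fun x hx => by
      rw [Real.norm_eq_abs, abs_of_nonneg (hfnonneg x)]; exact hfg x hx
  -- integrability of f on the near region
  have hfint_near : IntegrableOn f (Set.Ioc (A₀ - 1) t) :=
    (hfcont.integrableOn_Ioc)
  have hunion : Set.Iic (A₀ - 1) ∪ Set.Ioc (A₀ - 1) t = Set.Iic t :=
    Set.Iic_union_Ioc_eq_Iic (by linarith)
  have hfint : IntegrableOn f (Set.Iic t) := by
    rw [← hunion]; exact hfint_far.union hfint_near
  refine ⟨hfint, ?_⟩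
  -- split the integral
  have hsplit : ∫ t' in Set.Iic t, f t' =
      (∫ t' in Set.Iic (A₀ - 1), f t') + ∫ t' in Set.Ioc (A₀ - 1) t, f t' := by
    rw [← hunion]
    exact setIntegral_union (Set.Iic_disjoint_Ioc le_rfl) measurableSet_Ioc
      hfint_far hfint_near
  rw [hsplit]
  -- far part: ∫ f ≤ ∫ g = RHS far integral
  have hfar : (∫ t' in Set.Iic (A₀ - 1), f t') ≤
      ∫ t' in Set.Iic (A₀ - 1), 2 * |t - t'| *
        (1 + (t - t') ^ 2 * (1 - (c / (t - t')) ^ 2)) ^ (-(5 : ℝ) / 4) := by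
    have heq : ∀ t' ∈ Set.Iic (A₀ - 1),
        2 * |t - t'| * (1 + (t - t') ^ 2 * (1 - (c / (t - t')) ^ 2)) ^ (-(5 : ℝ) / 4)
          = g t' := by
      intro t' ht'
      simp only [Set.mem_Iic] at ht'
      have hne : t - t' ≠ 0 := by intro h; simp at *; linarith [hc0]
      have habs : |t - t'| = t - t' := abs_of_pos (by linarith [hc0, sub_pos.mpr ht])
      show _ = 2 * (t - t') * (1 + ((t - t') ^ 2 - c ^ 2)) ^ (-(5:ℝ)/4)
      rw [habs]
      congr 2
      field_simp
    rw [setIntegral_congr_fun measurableSet_Iic heq]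
    exact setIntegral_mono_on hfint_far hgint measurableSet_Iic hfg
  -- near part
  have hnear : (∫ t' in Set.Ioc (A₀ - 1) t, f t') ≤ |c + 1| ^ 2 := by
    have hbound : ∀ t' ∈ Set.Ioc (A₀ - 1) t, f t' ≤ 2 * (t - t') := by
      intro t' ht'
      have habs : |t - t'| = t - t' := abs_of_nonneg (by linarith [ht'.2])
      show 2 * |t - t'| / (B t') ^ ((5:ℝ)/4) ≤ 2 * (t - t')
      rw [habs]
      apply div_le_self (by linarith [ht'.2])
      calc (1:ℝ) = 1 ^ ((5:ℝ)/4) := (Real.one_rpow _).symm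
        _ ≤ (B t') ^ ((5:ℝ)/4) := Real.rpow_le_rpow zero_le_one (hB1 t') (by norm_num)
    have hlin_int : IntegrableOn (fun t' : ℝ => 2 * (t - t')) (Set.Ioc (A₀ - 1) t) :=
      (continuous_const.mul (continuous_const.sub continuous_id)).integrableOn_Ioc
    have h1 : (∫ t' in Set.Ioc (A₀ - 1) t, f t') ≤
        ∫ t' in Set.Ioc (A₀ - 1) t, 2 * (t - t') :=
      setIntegral_mono_on hfint_near hlin_int measurableSet_Ioc hbound
    have h2 : (∫ t' in Set.Ioc (A₀ - 1) t, 2 * (t - t')) = (c + 1) ^ 2 := by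
      rw [← intervalIntegral.integral_of_le (by linarith : A₀ - 1 ≤ t)]
      have hd : ∀ x ∈ Set.uIcc (A₀ - 1) t,
          HasDerivAt (fun x : ℝ => -(t - x) ^ 2) (2 * (t - x)) x := by
        intro x _
        have h1 : HasDerivAt (fun x : ℝ => t - x) (-1) x := by
          simpa using (hasDerivAt_id x).const_sub t
        have := (h1.pow 2).neg
        refine this.congr_deriv ?_
        ring
      rw [intervalIntegral.integral_eq_sub_of_hasDerivAt hd
        ((continuous_const.mul (continuous_const.sub continuous_id)).intervalIntegrable _ _)]
      rw [hc]; ring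
    have h3 : (c + 1) ^ 2 = |c + 1| ^ 2 := (sq_abs _).symm
    linarith
  linarith
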